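/- arXiv:1307.6041 — 5 statements merged into one kernel-verified Lean document; each statement's English description precedes it below -/
import Mathlib

section
/- Let n, n_{v1}, n_{v2}, n_y be positive integers and set n_v = n_{v1} + n_{v2}. Let A ∈ ℝ^{n×n}, B ∈ ℝ^{n×n_{v1}}, C ∈ ℝ^{n_y×n}, D ∈ ℝ^{n_y×n_{v2}}. Assume: (1) A is Hurwitz; (2) there exists F ∈ ℝ^{n_{v1}×n} such that -A + BF is Hurwitz; (3) D has full row rank n_y. Then there exist real matrices A_1, A_2 ∈ ℝ^{n×n}, B_1, B_3 ∈ ℝ^{n×n_{v1}}, B_2, B_4 ∈ ℝ^{n×n_{v2}}, C_1, C_2 ∈ ℝ^{n_y×n}, D_1, D_3 ∈ ℝ^{n_y×n_{v1}}, D_2, D_4 ∈ ℝ^{n_y×n_{v2}} such that the block matrices Ã = [[A, 0],[A_1, A_2]] ∈ ℝ^{2n×2n}, B̃ = [[B, 0, 0, 0],[B_1, B_2, B_3, B_4]] ∈ ℝ^{2n×2n_v}, C̃ = [[C, 0],[C_1, C_2]] ∈ ℝ^{2n_y×2n}, D̃ = [[0, D, 0, 0],[D_1, D_2, D_3, D_4]]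 ∈ ℝ^{2n_y×2n_v} satisfy: (i) Ã is Hurwitz; (ii) Ã J_n + J_n Ãᵀ + B̃ J_{n_v} B̃ᵀ = 0; (iii) B̃ J_{n_v} D̃ᵀ = -J_n C̃ᵀ; (iv) D̃ J_{n_v} D̃ᵀ = J_{n_y}; (v) for every s ∈ ℂ such that the complexifications of sI_{2n} - Ã and sI_n - A are invertible, the submatrix of C̃(sI_{2n} - Ã)^{-1}B̃ + D̃ consisting of its first n_y rows and first n_v columns equals the n_y × n_v matrix whose first n_{v1} columns are C(sI_n - A)^{-1}B and whose last n_{v2} columns are D (all matrices regarded as complex via entrywise inclusion ℝ ↪ ℂ). -/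
open Matrix

noncomputable section

/-- `Jmat k` is the `2k × 2k` real matrix `[[0, I],[-I, 0]]` in block form. -/
def Jmat (k : Type*) [Fintype k] [DecidableEq k] : Matrix (k ⊕ k) (k ⊕ k) ℝ :=
  Matrix.fromBlocks 0 1 (-1) 0

/-- A real square matrix is Hurwitz if every eigenvalue of its complexification
has negative real part. -/
def IsHurwitz {k : Type*} [Fintype k] [DecidableEq k] (M : Matrix k k ℝ) : Prop :=
  ∀ z ∈ spectrum ℂ (M.map (algebraMap ℝ ℂ)), z.re < 0

/-- Entrywise complexification of a real matrix. -/
def cx {k l : Type*} (M : Matrix k l ℝ) : Matrix k l ℂ :=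
  M.map (algebraMap ℝ ℂ)

section Helpers

variable {m p q r : Type*} [Fintype m] [Fintype p] [DecidableEq m] [DecidableEq p]

lemma spec_blockdiag (M : Matrix m m ℂ) (N : Matrix p p ℂ) (P : Matrix p m ℂ) (z : ℂ)
    (hz : z ∈ spectrum ℂ (Matrix.fromBlocks M 0 P N)) :
    z ∈ spectrum ℂ M ∨ z ∈ spectrum ℂ N := by
  by_contra h
  push_neg at h
  rw [spectrum.mem_iff] at hz
  obtain ⟨h1, h2⟩ := h
  rw [spectrum.notMem_iff] at h1 h2
  apply hz
  have key : algebraMap ℂ (Matrix (m ⊕ p) (m ⊕ p) ℂ) z - Matrix.fromBlocks M 0 P N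
      = Matrix.fromBlocks (algebraMap ℂ (Matrix m m ℂ) z - M) 0 (-P)
        (algebraMap ℂ (Matrix p p ℂ) z - N) := by
    rw [Algebra.algebraMap_eq_smul_one, Algebra.algebraMap_eq_smul_one,
      Algebra.algebraMap_eq_smul_one, ← Matrix.fromBlocks_one, Matrix.fromBlocks_smul]
    ext (i|i) (j|j) <;> simp [Matrix.fromBlocks]
  rw [key, Matrix.isUnit_iff_isUnit_det, Matrix.det_fromBlocks_zero₁₂]
  exact ((Matrix.isUnit_iff_isUnit_det _).mp h1).mul ((Matrix.isUnit_iff_isUnit_det _).mp h2)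

lemma spec_transpose (M : Matrix m m ℂ) : spectrum ℂ Mᵀ = spectrum ℂ M := by
  ext z
  rw [spectrum.mem_iff, spectrum.mem_iff]
  have : algebraMap ℂ (Matrix m m ℂ) z - Mᵀ = (algebraMap ℂ (Matrix m m ℂ) z - M)ᵀ := by
    rw [Matrix.transpose_sub, Algebra.algebraMap_eq_smul_one, Matrix.transpose_smul,
      Matrix.transpose_one]
  rw [this, Matrix.isUnit_iff_isUnit_det, Matrix.det_transpose, Matrix.isUnit_iff_isUnit_det]

lemma cx_mul {l : Type*} [Fintype p] (M : Matrix m p ℝ) (N : Matrix p l ℝ) :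
    cx (M * N) = cx M * cx N := Matrix.map_mul

lemma cx_transpose {l : Type*} (M : Matrix m l ℝ) : cx Mᵀ = (cx M)ᵀ :=
  Matrix.transpose_map

lemma cx_fromBlocks {a b c d : Type*} (M : Matrix a c ℝ) (N : Matrix a d ℝ)
    (P : Matrix b c ℝ) (Q : Matrix b d ℝ) :
    cx (Matrix.fromBlocks M N P Q) = Matrix.fromBlocks (cx M) (cx N) (cx P) (cx Q) :=
  Matrix.fromBlocks_map M N P Q _

lemma cx_fromColumns {a b c : Type*} (M : Matrix a b ℝ) (N : Matrix a c ℝ) :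
    cx (Matrix.fromCols M N) = Matrix.fromCols (cx M) (cx N) := by
  ext i (j | j) <;> rfl

@[simp] lemma cx_zero {a b : Type*} : cx (0 : Matrix a b ℝ) = 0 := by
  ext i j; simp [cx]

lemma blockdiag_inv (M : Matrix m m ℂ) (N : Matrix p p ℂ)
    (h : IsUnit (Matrix.fromBlocks M 0 0 N)) :
    (Matrix.fromBlocks M 0 0 N)⁻¹ = Matrix.fromBlocks M⁻¹ 0 0 N⁻¹ := by
  have hdet := (Matrix.isUnit_iff_isUnit_det _).mp h
  rw [Matrix.det_fromBlocks_zero₁₂] at hdet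
  have hM : IsUnit M.det := isUnit_of_mul_isUnit_left hdet
  have hN : IsUnit N.det := isUnit_of_mul_isUnit_right hdet
  apply Matrix.inv_eq_right_inv
  rw [Matrix.fromBlocks_multiply]
  simp [Matrix.mul_nonsing_inv _ hM, Matrix.mul_nonsing_inv _ hN, Matrix.fromBlocks_one]

end Helpers

theorem stmt_0 (n nv1 nv2 ny : ℕ) (hn : 0 < n) (hv1 : 0 < nv1) (hv2 : 0 < nv2) (hy : 0 < ny)
    (A : Matrix (Fin n) (Fin n) ℝ) (B : Matrix (Fin n) (Fin nv1) ℝ)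
    (C : Matrix (Fin ny) (Fin n) ℝ) (D : Matrix (Fin ny) (Fin nv2) ℝ)
    (hA : IsHurwitz A)
    (hstab : ∃ F : Matrix (Fin nv1) (Fin n) ℝ, IsHurwitz (-A + B * F))
    (hD : D.rank = ny) :
    ∃ (A₁ A₂ : Matrix (Fin n) (Fin n) ℝ)
      (B₁ B₃ : Matrix (Fin n) (Fin nv1) ℝ) (B₂ B₄ : Matrix (Fin n) (Fin nv2) ℝ)
      (C₁ C₂ : Matrix (Fin ny) (Fin n) ℝ)
      (D₁ D₃ : Matrix (Fin ny) (Fin nv1) ℝ) (D₂ D₄ : Matrix (Fin ny) (Fin nv2) ℝ),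
      let Atil : Matrix (Fin n ⊕ Fin n) (Fin n ⊕ Fin n) ℝ := Matrix.fromBlocks A 0 A₁ A₂
      let Btil : Matrix (Fin n ⊕ Fin n) ((Fin nv1 ⊕ Fin nv2) ⊕ (Fin nv1 ⊕ Fin nv2)) ℝ :=
        Matrix.fromBlocks (Matrix.fromCols B 0) 0
          (Matrix.fromCols B₁ B₂) (Matrix.fromCols B₃ B₄)
      let Ctil : Matrix (Fin ny ⊕ Fin ny) (Fin n ⊕ Fin n) ℝ := Matrix.fromBlocks C 0 C₁ C₂
      let Dtil : Matrix (Fin ny ⊕ Fin ny) ((Fin nv1 ⊕ Fin nv2) ⊕ (Fin nv1 ⊕ Fin nv2)) ℝ :=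
        Matrix.fromBlocks (Matrix.fromCols 0 D) 0
          (Matrix.fromCols D₁ D₂) (Matrix.fromCols D₃ D₄)
      IsHurwitz Atil ∧
      Atil * Jmat (Fin n) + Jmat (Fin n) * Atilᵀ
          + Btil * Jmat (Fin nv1 ⊕ Fin nv2) * Btilᵀ = 0 ∧
      Btil * Jmat (Fin nv1 ⊕ Fin nv2) * Dtilᵀ = -(Jmat (Fin n) * Ctilᵀ) ∧
      Dtil * Jmat (Fin nv1 ⊕ Fin nv2) * Dtilᵀ = Jmat (Fin ny) ∧
      ∀ s : ℂ,
        IsUnit (s • (1 : Matrix (Fin n ⊕ Fin n) (Fin n ⊕ Fin n) ℂ) - cx Atil) →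
        IsUnit (s • (1 : Matrix (Fin n) (Fin n) ℂ) - cx A) →
        (cx Ctil
            * (s • (1 : Matrix (Fin n ⊕ Fin n) (Fin n ⊕ Fin n) ℂ) - cx Atil)⁻¹
            * cx Btil + cx Dtil).submatrix Sum.inl Sum.inl
          = Matrix.fromCols
              (cx C * (s • (1 : Matrix (Fin n) (Fin n) ℂ) - cx A)⁻¹ * cx B) (cx D) := by
  classical
  obtain ⟨F, hF⟩ := hstab
  -- D * Dᵀ is invertible
  have hDD : IsUnit (D * Dᵀ) := by
    have hrank : (D * Dᵀ).rank = ny := by rw [Matrix.rank_self_mul_transpose, hD]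
    rw [← Matrix.mulVec_surjective_iff_isUnit]
    have : LinearMap.range (D * Dᵀ).mulVecLin = ⊤ := by
      apply Submodule.eq_top_of_finrank_eq
      rw [← Matrix.rank, hrank, Module.finrank_pi, Fintype.card_fin]
    intro v
    exact (LinearMap.range_eq_top.mp this) v
  have hDDdet : IsUnit (D * Dᵀ).det := (Matrix.isUnit_iff_isUnit_det _).mp hDD
  set G : Matrix (Fin ny) (Fin ny) ℝ := (D * Dᵀ)⁻¹ with hGdef
  have hG1 : D * Dᵀ * G = 1 := Matrix.mul_nonsing_inv _ hDDdet
  have hG2 : G * (D * Dᵀ) = 1 := Matrix.nonsing_inv_mul _ hDDdet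
  have hGsymm : Gᵀ = G := by
    rw [hGdef, Matrix.transpose_nonsing_inv, Matrix.transpose_mul, Matrix.transpose_transpose]
  refine ⟨0, -Aᵀ + Fᵀ * Bᵀ, 0, -Fᵀ, 0, -(Cᵀ * (G * D)), 0, 0, 0, 0, 0, G * D,
    ?_, ?_, ?_, ?_, ?_⟩
  · -- Hurwitz
    intro z hz
    have hmap : (Matrix.fromBlocks A 0 0 (-Aᵀ + Fᵀ * Bᵀ)).map (algebraMap ℝ ℂ)
        = Matrix.fromBlocks (cx A) 0 0 (cx (-Aᵀ + Fᵀ * Bᵀ)) := by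
      rw [show (Matrix.fromBlocks A 0 0 (-Aᵀ + Fᵀ * Bᵀ)).map (algebraMap ℝ ℂ)
          = cx (Matrix.fromBlocks A 0 0 (-Aᵀ + Fᵀ * Bᵀ)) from rfl, cx_fromBlocks, cx_zero]
    rw [hmap] at hz
    rcases spec_blockdiag _ _ _ z hz with h | h
    · exact hA z h
    · have htr : cx (-Aᵀ + Fᵀ * Bᵀ) = (cx (-A + B * F))ᵀ := by
        have : -Aᵀ + Fᵀ * Bᵀ = (-A + B * F)ᵀ := by
          rw [Matrix.transpose_add, Matrix.transpose_neg, Matrix.transpose_mul]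
        rw [this, cx_transpose]
      rw [htr, spec_transpose] at h
      exact hF z h
  · simp only [Jmat, Matrix.fromBlocks_multiply, Matrix.fromBlocks_transpose,
      Matrix.transpose_fromCols, Matrix.fromCols_mul_fromRows, Matrix.fromBlocks_add,
      Matrix.fromCols_zero, Matrix.transpose_zero, Matrix.mul_zero, Matrix.zero_mul,
      Matrix.mul_one, Matrix.one_mul, Matrix.mul_neg, Matrix.neg_mul, add_zero, zero_add,
      Matrix.transpose_neg, Matrix.transpose_add, Matrix.transpose_mul,
      Matrix.transpose_transpose, neg_zero, neg_neg]
    conv_rhs => rw [← Matrix.fromBlocks_zero]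
    rw [Matrix.fromBlocks_inj]
    refine ⟨?_, ?_, ?_, ?_⟩ <;> abel
  · -- condition (iii)
    simp only [Jmat, Matrix.fromBlocks_multiply, Matrix.fromBlocks_transpose,
      Matrix.transpose_fromCols, Matrix.fromCols_mul_fromRows,
      Matrix.fromCols_zero, Matrix.transpose_zero, Matrix.mul_zero, Matrix.zero_mul,
      Matrix.mul_one, Matrix.one_mul, Matrix.mul_neg, Matrix.neg_mul, add_zero, zero_add,
      Matrix.transpose_neg, Matrix.transpose_mul, Matrix.transpose_transpose,
      neg_zero, neg_neg, Matrix.fromBlocks_neg]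
    rw [Matrix.fromBlocks_inj]
    refine ⟨rfl, rfl, ?_, rfl⟩
    rw [Matrix.mul_assoc, Matrix.mul_assoc, hG2, Matrix.mul_one]
  · -- condition (iv)
    simp only [Jmat, Matrix.fromBlocks_multiply, Matrix.fromBlocks_transpose,
      Matrix.transpose_fromCols, Matrix.fromCols_mul_fromRows,
      Matrix.fromCols_zero, Matrix.transpose_zero, Matrix.mul_zero, Matrix.zero_mul,
      Matrix.mul_one, Matrix.one_mul, Matrix.mul_neg, Matrix.neg_mul, add_zero, zero_add,
      Matrix.transpose_neg, Matrix.transpose_mul, Matrix.transpose_transpose,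
      neg_zero, neg_neg]
    rw [Matrix.fromBlocks_inj]
    refine ⟨rfl, ?_, ?_, rfl⟩
    · rw [hGsymm, ← Matrix.mul_assoc, hG1]
    · rw [Matrix.mul_assoc, hG2]
  · -- condition (v)
    intro s hs1 hs2
    have hsplit : s • (1 : Matrix (Fin n ⊕ Fin n) (Fin n ⊕ Fin n) ℂ)
        - cx (Matrix.fromBlocks A 0 0 (-Aᵀ + Fᵀ * Bᵀ))
        = Matrix.fromBlocks (s • (1 : Matrix (Fin n) (Fin n) ℂ) - cx A) 0 0
          (s • (1 : Matrix (Fin n) (Fin n) ℂ) - cx (-Aᵀ + Fᵀ * Bᵀ)) := by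
      rw [cx_fromBlocks, cx_zero, ← Matrix.fromBlocks_one, Matrix.fromBlocks_smul]
      ext (i | i) (j | j) <;> simp [Matrix.fromBlocks]
    rw [hsplit] at hs1 ⊢
    rw [blockdiag_inv _ _ hs1]
    simp only [cx_fromBlocks, cx_fromColumns, cx_zero, Matrix.fromCols_zero,
      Matrix.fromBlocks_multiply, Matrix.mul_zero, Matrix.zero_mul, add_zero, zero_add,
      Matrix.fromBlocks_add]
    simp only [Matrix.mul_fromCols, Matrix.mul_zero]
    ext i (j | j) <;> simp [Matrix.fromBlocks, Matrix.fromCols]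
end
end

section
/- Let n, n_{v1}, n_{v2} be positive integers and n_v = n_{v1} + n_{v2}. Let A, A_1, A_2 ∈ ℝ^{n×n}, B, B_1, B_3 ∈ ℝ^{n×n_{v1}}, B_2, B_4 ∈ ℝ^{n×n_{v2}}, and form Ã = [[A, 0],[A_1, A_2]] ∈ ℝ^{2n×2n} and B̃ = [[B, 0, 0, 0],[B_1, B_2, B_3, B_4]] ∈ ℝ^{2n×2n_v} (block columns of widths n_{v1}, n_{v2}, n_{v1}, n_{v2}). Then Ã J_n + J_n Ãᵀ + B̃ J_{n_v} B̃ᵀ = 0 holds if and only if both A + A_2ᵀ + B B_3ᵀ = 0 and A_1 - A_1ᵀ + B_1 B_3ᵀ + B_2 B_4ᵀ - B_3 B_1ᵀ - B_4 B_2ᵀ = 0. -/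
open Matrix

theorem stmt_1 (n nv1 nv2 : ℕ) (hn : 0 < n) (hv1 : 0 < nv1) (hv2 : 0 < nv2)
    (A A₁ A₂ : Matrix (Fin n) (Fin n) ℝ)
    (B B₁ B₃ : Matrix (Fin n) (Fin nv1) ℝ) (B₂ B₄ : Matrix (Fin n) (Fin nv2) ℝ) :
    (Matrix.fromBlocks A 0 A₁ A₂ * Jmat (Fin n)
        + Jmat (Fin n) * (Matrix.fromBlocks A 0 A₁ A₂)ᵀ
        + Matrix.fromBlocks (Matrix.fromCols B 0) 0
            (Matrix.fromCols B₁ B₂) (Matrix.fromCols B₃ B₄)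
          * Jmat (Fin nv1 ⊕ Fin nv2)
          * (Matrix.fromBlocks (Matrix.fromCols B 0) 0
              (Matrix.fromCols B₁ B₂) (Matrix.fromCols B₃ B₄))ᵀ = 0)
    ↔ (A + A₂ᵀ + B * B₃ᵀ = 0 ∧
        A₁ - A₁ᵀ + B₁ * B₃ᵀ + B₂ * B₄ᵀ - B₃ * B₁ᵀ - B₄ * B₂ᵀ = 0) := by
  have h0 : (0 : Matrix (Fin n ⊕ Fin n) (Fin n ⊕ Fin n) ℝ)
      = Matrix.fromBlocks 0 0 0 0 := by simp
  rw [h0]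
  simp only [Jmat, Matrix.fromBlocks_multiply, Matrix.fromBlocks_transpose,
    Matrix.fromBlocks_add, Matrix.transpose_fromCols,
    Matrix.fromBlocks_inj, Matrix.mul_zero, Matrix.zero_mul, Matrix.mul_one, Matrix.one_mul,
    Matrix.mul_neg, Matrix.neg_mul, add_zero, zero_add, Matrix.transpose_zero,
    Matrix.fromCols_mul_fromRows, neg_zero]
  rw [true_and]
  constructor
  · rintro ⟨h1, -, h3⟩
    exact ⟨h1, by linear_combination (norm := abel) h3⟩
  · rintro ⟨h1, h2⟩
    have h1t := congrArg Matrix.transpose h1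
    simp only [Matrix.transpose_add, Matrix.transpose_transpose, Matrix.transpose_mul,
      Matrix.transpose_zero] at h1t
    exact ⟨h1, by linear_combination (norm := abel) -h1t, by linear_combination (norm := abel) h2⟩
end

section
/- Let n_{v1}, n_{v2}, n_y be positive integers and n_v = n_{v1} + n_{v2}. Let D, D_2, D_4 ∈ ℝ^{n_y×n_{v2}}, D_1, D_3 ∈ ℝ^{n_y×n_{v1}}, and form D̃ = [[0, D, 0, 0],[D_1, D_2, D_3, D_4]] ∈ ℝ^{2n_y×2n_v} (block columns of widths n_{v1}, n_{v2}, n_{v1}, n_{v2}). Then D̃ J_{n_v} D̃ᵀ = J_{n_y} holds if and only if both D D_4ᵀ = I_{n_y} and D_1 D_3ᵀ + D_2 D_4ᵀ - D_3 D_1ᵀ - D_4 D_2ᵀ = 0. -/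
open Matrix

theorem stmt_2 (nv1 nv2 ny : ℕ) (hv1 : 0 < nv1) (hv2 : 0 < nv2) (hy : 0 < ny)
    (D D₂ D₄ : Matrix (Fin ny) (Fin nv2) ℝ) (D₁ D₃ : Matrix (Fin ny) (Fin nv1) ℝ) :
    (Matrix.fromBlocks (Matrix.fromCols 0 D) 0
        (Matrix.fromCols D₁ D₂) (Matrix.fromCols D₃ D₄)
      * Jmat (Fin nv1 ⊕ Fin nv2)
      * (Matrix.fromBlocks (Matrix.fromCols 0 D) 0
          (Matrix.fromCols D₁ D₂) (Matrix.fromCols D₃ D₄))ᵀ = Jmat (Fin ny))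
    ↔ (D * D₄ᵀ = 1 ∧ D₁ * D₃ᵀ + D₂ * D₄ᵀ - D₃ * D₁ᵀ - D₄ * D₂ᵀ = 0) := by
  rw [show (Matrix.fromBlocks (Matrix.fromCols 0 D) 0
        (Matrix.fromCols D₁ D₂) (Matrix.fromCols D₃ D₄))ᵀ
      = Matrix.fromBlocks (Matrix.fromCols 0 D)ᵀ (Matrix.fromCols D₁ D₂)ᵀ
        0ᵀ (Matrix.fromCols D₃ D₄)ᵀ from fromBlocks_transpose _ _ _ _]
  simp only [Jmat, fromBlocks_multiply, transpose_fromCols,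
    fromCols_mul_fromRows, transpose_zero, Matrix.mul_zero, Matrix.zero_mul,
    Matrix.mul_one, Matrix.one_mul, Matrix.mul_neg, Matrix.neg_mul, add_zero, zero_add,
    neg_zero, Matrix.fromBlocks_inj]
  constructor
  · rintro ⟨-, h1, -, h2⟩
    exact ⟨h1, by rw [sub_sub, sub_eq_zero]; exact (neg_add_eq_zero.mp h2).symm⟩
  · rintro ⟨h1, h2⟩
    rw [sub_sub, sub_eq_zero] at h2
    have h4 : D₄ * Dᵀ = 1 := by simpa using congrArg Matrix.transpose h1
    exact ⟨trivial, h1, neg_inj.mpr h4, neg_add_eq_zero.mpr h2.symm⟩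
end

section
/- Let n, n_{v1}, n_{v2}, n_y be positive integers and n_v = n_{v1} + n_{v2}. Let B, B_1, B_3 ∈ ℝ^{n×n_{v1}}, B_2, B_4 ∈ ℝ^{n×n_{v2}}, C, C_1, C_2 ∈ ℝ^{n_y×n}, D, D_2, D_4 ∈ ℝ^{n_y×n_{v2}}, D_1, D_3 ∈ ℝ^{n_y×n_{v1}}. Form B̃ = [[B, 0, 0, 0],[B_1, B_2, B_3, B_4]] ∈ ℝ^{2n×2n_v}, C̃ = [[C, 0],[C_1, C_2]] ∈ ℝ^{2n_y×2n}, D̃ = [[0, D, 0, 0],[D_1, D_2, D_3, D_4]] ∈ ℝ^{2n_y×2n_v} (block columns of B̃ and D̃ of widths n_{v1}, n_{v2}, n_{v1}, n_{v2}). Then B̃ J_{n_v} D̃ᵀ = -J_n C̃ᵀ holds if and only if the following three equations hold: C_2 = -D_3 Bᵀ, B_4 Dᵀ = -Cᵀ, and C_1 = D_4 B_2ᵀ + D_3 B_1ᵀ - D_2 B_4ᵀ - D_1 B_3ᵀ. -/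
open Matrix

theorem stmt_3 (n nv1 nv2 ny : ℕ) (hn : 0 < n) (hv1 : 0 < nv1) (hv2 : 0 < nv2) (hy : 0 < ny)
    (B B₁ B₃ : Matrix (Fin n) (Fin nv1) ℝ) (B₂ B₄ : Matrix (Fin n) (Fin nv2) ℝ)
    (C C₁ C₂ : Matrix (Fin ny) (Fin n) ℝ)
    (D D₂ D₄ : Matrix (Fin ny) (Fin nv2) ℝ) (D₁ D₃ : Matrix (Fin ny) (Fin nv1) ℝ) :
    (Matrix.fromBlocks (Matrix.fromCols B 0) 0
        (Matrix.fromCols B₁ B₂) (Matrix.fromCols B₃ B₄)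
      * Jmat (Fin nv1 ⊕ Fin nv2)
      * (Matrix.fromBlocks (Matrix.fromCols 0 D) 0
          (Matrix.fromCols D₁ D₂) (Matrix.fromCols D₃ D₄))ᵀ
      = -(Jmat (Fin n) * (Matrix.fromBlocks C 0 C₁ C₂)ᵀ))
    ↔ (C₂ = -(D₃ * Bᵀ) ∧ B₄ * Dᵀ = -Cᵀ ∧
        C₁ = D₄ * B₂ᵀ + D₃ * B₁ᵀ - D₂ * B₄ᵀ - D₁ * B₃ᵀ) := by
  rw [Jmat, Jmat]
  simp only [Matrix.fromBlocks_transpose, Matrix.fromBlocks_multiply, Matrix.fromBlocks_neg,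
    Matrix.mul_zero, Matrix.zero_mul, Matrix.mul_one, Matrix.one_mul, Matrix.mul_neg,
    Matrix.neg_mul, add_zero, zero_add, Matrix.transpose_fromCols, Matrix.transpose_zero,
    Matrix.fromCols_mul_fromRows, Matrix.transpose_neg, neg_neg, neg_zero,
    Matrix.one_mul, Matrix.transpose_one]
  rw [Matrix.fromBlocks_inj]
  constructor
  · rintro ⟨-, h2, h3, h4⟩
    refine ⟨?_, ?_, ?_⟩
    · have := congrArg Matrix.transpose h2
      simp only [Matrix.transpose_add, Matrix.transpose_neg, Matrix.transpose_mul,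
        Matrix.transpose_transpose, Matrix.transpose_zero] at this
      rw [this, neg_neg]
    · have := congrArg Neg.neg h3
      simp only [neg_neg] at this ⊢
      linear_combination (norm := abel) this
    · have := congrArg Matrix.transpose h4
      simp only [Matrix.transpose_add, Matrix.transpose_neg, Matrix.transpose_mul,
        Matrix.transpose_transpose] at this
      rw [← this]; abel
  · rintro ⟨h2, h3, h4⟩
    refine ⟨rfl, ?_, ?_, ?_⟩
    · have := congrArg Matrix.transpose h2
      simp only [Matrix.transpose_neg, Matrix.transpose_mul, Matrix.transpose_transpose] at this
      rw [this, neg_neg]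
    · linear_combination (norm := abel) -h3
    · have := congrArg Matrix.transpose h4
      simp only [Matrix.transpose_sub, Matrix.transpose_add, Matrix.transpose_neg,
        Matrix.transpose_mul, Matrix.transpose_transpose] at this
      rw [this]; abel
end

section
/- Let n, m be positive integers, Ã ∈ ℝ^{2n×2n} and B̃ ∈ ℝ^{2n×2m}, and suppose Ã J_n + J_n Ãᵀ + B̃ J_m B̃ᵀ = 0. Then for every t ∈ ℝ, exp(t Ã) J_n exp(t Ãᵀ) + ∫₀ᵗ exp(s Ã) B̃ J_m B̃ᵀ exp(s Ãᵀ) ds = J_n, where exp denotes the matrix exponential and the integral is taken entrywise. -/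
open Matrix

noncomputable section

attribute [local instance] Matrix.linftyOpNormedAddCommGroup Matrix.linftyOpNormedRing
  Matrix.linftyOpNormedAlgebra

theorem stmt_10 (n m : ℕ) (hn : 0 < n) (hm : 0 < m)
    (Atil : Matrix (Fin n ⊕ Fin n) (Fin n ⊕ Fin n) ℝ)
    (Btil : Matrix (Fin n ⊕ Fin n) (Fin m ⊕ Fin m) ℝ)
    (h : Atil * Jmat (Fin n) + Jmat (Fin n) * Atilᵀ
        + Btil * Jmat (Fin m) * Btilᵀ = 0) :
    ∀ t : ℝ,
      NormedSpace.exp (t • Atil) * Jmat (Fin n) * NormedSpace.exp (t • Atilᵀ)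
        + Matrix.of (fun i j =>
            ∫ u in (0 : ℝ)..t,
              (NormedSpace.exp (u • Atil) * (Btil * Jmat (Fin m) * Btilᵀ)
                * NormedSpace.exp (u • Atilᵀ)) i j)
        = Jmat (Fin n) := by
  intro t
  set J := Jmat (Fin n) with hJ
  set K := Btil * Jmat (Fin m) * Btilᵀ with hK
  have hAJ : Atil * J + J * Atilᵀ = -K := by
    rw [add_eq_zero_iff_eq_neg] at h
    exact h
  set F : ℝ → Matrix (Fin n ⊕ Fin n) (Fin n ⊕ Fin n) ℝ :=
    fun u => NormedSpace.exp (u • Atil) * J * NormedSpace.exp (u • Atilᵀ) with hF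
  have hFd : ∀ u : ℝ, HasDerivAt F
      (-(NormedSpace.exp (u • Atil) * K * NormedSpace.exp (u • Atilᵀ))) u := by
    intro u
    have h1 : HasDerivAt (fun v : ℝ => NormedSpace.exp (v • Atil))
        (NormedSpace.exp (u • Atil) * Atil) u := hasDerivAt_exp_smul_const Atil u
    have h2 : HasDerivAt (fun v : ℝ => NormedSpace.exp (v • Atilᵀ))
        (Atilᵀ * NormedSpace.exp (u • Atilᵀ)) u := hasDerivAt_exp_smul_const' Atilᵀ u
    have h3 := (h1.mul_const J).mul h2
    refine HasDerivAt.congr_deriv h3 ?_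
    have e1 : NormedSpace.exp (u • Atil) * Atil * J * NormedSpace.exp (u • Atilᵀ)
        + NormedSpace.exp (u • Atil) * J * (Atilᵀ * NormedSpace.exp (u • Atilᵀ))
        = NormedSpace.exp (u • Atil) * (Atil * J + J * Atilᵀ)
          * NormedSpace.exp (u • Atilᵀ) := by noncomm_ring
    rw [e1, hAJ]
    noncomm_ring
  have hFc : Continuous fun u : ℝ =>
      -(NormedSpace.exp (u • Atil) * K * NormedSpace.exp (u • Atilᵀ)) := by
    have c1 : Continuous fun u : ℝ => NormedSpace.exp (u • Atil) :=
      continuous_iff_continuousAt.2 fun u => (hasDerivAt_exp_smul_const Atil u).continuousAt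
    have c2 : Continuous fun u : ℝ => NormedSpace.exp (u • Atilᵀ) :=
      continuous_iff_continuousAt.2 fun u => (hasDerivAt_exp_smul_const Atilᵀ u).continuousAt
    exact ((c1.mul continuous_const).mul c2).neg
  ext i j
  let E : Matrix (Fin n ⊕ Fin n) (Fin n ⊕ Fin n) ℝ →L[ℝ] ℝ :=
    { toFun := fun M => M i j
      map_add' := fun _ _ => rfl
      map_smul' := fun _ _ => rfl
      cont := (continuous_apply j).comp (continuous_apply i) }
  have key : ∫ u in (0:ℝ)..t,
      (-(NormedSpace.exp (u • Atil) * K * NormedSpace.exp (u • Atilᵀ))) i j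
      = F t i j - F 0 i j := by
    have hg : ∀ u ∈ Set.uIcc (0:ℝ) t, HasDerivAt (fun v => F v i j)
        ((-(NormedSpace.exp (u • Atil) * K * NormedSpace.exp (u • Atilᵀ))) i j) u := by
      intro u _
      exact (E.hasFDerivAt.comp_hasDerivAt u (hFd u))
    have hint : IntervalIntegrable (fun u =>
        (-(NormedSpace.exp (u • Atil) * K * NormedSpace.exp (u • Atilᵀ))) i j)
        MeasureTheory.volume 0 t :=
      (((continuous_apply j).comp (continuous_apply i)).comp hFc).intervalIntegrable 0 t
    exact intervalIntegral.integral_eq_sub_of_hasDerivAt hg hint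
  have hF0 : F 0 = J := by
    simp [hF, zero_smul, NormedSpace.exp_zero]
  rw [hF0] at key
  have key2 : ∫ u in (0:ℝ)..t,
      (NormedSpace.exp (u • Atil) * K * NormedSpace.exp (u • Atilᵀ)) i j
      = J i j - F t i j := by
    have e2 : (fun u : ℝ => (-(NormedSpace.exp (u • Atil) * K
        * NormedSpace.exp (u • Atilᵀ))) i j)
        = fun u : ℝ => -((NormedSpace.exp (u • Atil) * K
        * NormedSpace.exp (u • Atilᵀ)) i j) := by
      funext u; simp [Matrix.neg_apply]
    rw [e2, intervalIntegral.integral_neg] at key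
    linarith
  simp only [Matrix.add_apply, Matrix.of_apply]
  rw [key2]
  show F t i j + (J i j - F t i j) = J i j
  ring
end
end
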